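/- Let f be a transcendental meromorphic function on ℂ of finite order, c ∈ ℂ, and Δf(z) = f(z+c) − f(z) not identically zero. Suppose f and Δf share three distinct values e₁, e₂, ∞ CM, and suppose α and β are polynomials with (f − e₁)/(Δf − e₁) = e^{α} and (f − e₂)/(Δf − e₂) = e^{β} identically, where e^{α} is not identically 1, e^{β} is not identically 1, and e^{α} is not identically equal to e^{β}. Then, with γ = β − α, one has deg β = deg γ ≥ 1. -/

import Mathlib

open Filter

/-- `f` has a zero (if `n > 0`) or pole (if `n < 0`) of exact order `n` at `z`:
near `z` (off `z` itself), `f w = (w - z) ^ n * g w` with `g` analytic and nonvanishing at `z`. -/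
def HasOrderAt (f : ℂ → ℂ) (z : ℂ) (n : ℤ) : Prop :=
  ∃ g : ℂ → ℂ, AnalyticAt ℂ g z ∧ g z ≠ 0 ∧
    ∀ᶠ w in nhdsWithin z {z}ᶜ, f w = (w - z) ^ n * g w

/-- Two meromorphic functions share the finite value `a` CM: `f - a` and `g - a` have
exactly the same zeros with the same multiplicities (including "identically `a`" regions). -/
def ShareCM (f g : ℂ → ℂ) (a : ℂ) : Prop :=
  (∀ z : ℂ, ∀ n : ℤ, 0 < n →
      (HasOrderAt (fun w => f w - a) z n ↔ HasOrderAt (fun w => g w - a) z n)) ∧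
  (∀ z : ℂ, (∀ᶠ w in nhds z, f w = a) ↔ (∀ᶠ w in nhds z, g w = a))

/-- Two meromorphic functions share `∞` CM: same poles with the same multiplicities. -/
def SharePolesCM (f g : ℂ → ℂ) : Prop :=
  ∀ z : ℂ, ∀ n : ℤ, n < 0 → (HasOrderAt f z n ↔ HasOrderAt g z n)

/-- `f` is a meromorphic function of finite order: `f = g / h` with `g, h` entire,
`h` not identically zero, and `|g|, |h| ≤ C·exp(|z|^ρ)`. -/
def FiniteOrderMero (f : ℂ → ℂ) : Prop :=
  ∃ g h : ℂ → ℂ, Differentiable ℂ g ∧ Differentiable ℂ h ∧ (¬ ∀ z, h z = 0) ∧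
    (∀ z, h z ≠ 0 → f z = g z / h z) ∧
    ∃ C ρ : ℝ, 0 < C ∧ 0 < ρ ∧
      ∀ z : ℂ, ‖g z‖ ≤ C * Real.exp (‖z‖ ^ ρ) ∧
        ‖h z‖ ≤ C * Real.exp (‖z‖ ^ ρ)

/-- `f` is transcendental: it is not a rational function (as a meromorphic function,
i.e. away from its poles). -/
def TranscendentalMero (f : ℂ → ℂ) : Prop :=
  ¬ ∃ p q : Polynomial ℂ, q ≠ 0 ∧
      ∀ z : ℂ, AnalyticAt ℂ f z → q.eval z ≠ 0 → f z = p.eval z / q.eval z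

section BorelAux

open Polynomial


lemma kill_poly {p d : Polynomial ℂ} (hd : d ≠ 0) (h : p.derivative + p * d = 0) : p = 0 := by
  by_contra hp
  have h1 : p.derivative = -(p * d) := by linear_combination h
  have h2 : (p * d).degree = p.degree + d.degree := degree_mul
  have h3 : p.derivative.degree < p.degree := degree_derivative_lt hp
  rw [h1, degree_neg, h2] at h3
  have h4 : p.degree ≤ p.degree + d.degree :=
    le_add_of_nonneg_right (zero_le_degree_iff.mpr hd)
  exact absurd (lt_of_lt_of_le h3 h4) (lt_irrefl _)

lemma deriv_step {ι : Type} (s : Finset ι) (r pp : ι → Polynomial ℂ) (p₀ : Polynomial ℂ)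
    (h : ∀ z : ℂ, p₀.eval z + ∑ j ∈ s, (pp j).eval z * Complex.exp ((r j).eval z) = 0) :
    ∀ z : ℂ, p₀.derivative.eval z +
      ∑ j ∈ s, ((pp j).derivative + pp j * (r j).derivative).eval z
        * Complex.exp ((r j).eval z) = 0 := by
  intro z
  have hd : HasDerivAt (fun z : ℂ => p₀.eval z + ∑ j ∈ s, (pp j).eval z * Complex.exp ((r j).eval z))
      (p₀.derivative.eval z + ∑ j ∈ s, ((pp j).derivative.eval z * Complex.exp ((r j).eval z)
        + (pp j).eval z * (Complex.exp ((r j).eval z) * (r j).derivative.eval z))) z := by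
    refine HasDerivAt.add (Polynomial.hasDerivAt _ _) ?_
    refine HasDerivAt.fun_sum fun i _ => ?_
    exact (Polynomial.hasDerivAt _ _).mul ((Polynomial.hasDerivAt (r i) z).cexp)
  have h0 : (fun z : ℂ => p₀.eval z + ∑ j ∈ s, (pp j).eval z * Complex.exp ((r j).eval z))
      = fun _ => (0 : ℂ) := funext h
  rw [h0] at hd
  have hu := hd.unique (hasDerivAt_const z (0:ℂ))
  calc p₀.derivative.eval z + ∑ j ∈ s, ((pp j).derivative + pp j * (r j).derivative).eval z
        * Complex.exp ((r j).eval z)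
      = p₀.derivative.eval z + ∑ j ∈ s, ((pp j).derivative.eval z * Complex.exp ((r j).eval z)
        + (pp j).eval z * (Complex.exp ((r j).eval z) * (r j).derivative.eval z)) := by
        congr 1
        refine Finset.sum_congr rfl fun j _ => ?_
        simp only [eval_add, eval_mul]
        ring
    _ = 0 := hu

theorem borelP {ι : Type} [DecidableEq ι] :
    ∀ (n : ℕ) (s : Finset ι), s.card = n → ∀ (q p : ι → Polynomial ℂ),
      (∀ i ∈ s, ∀ j ∈ s, i ≠ j → 0 < (q i - q j).natDegree) →
      (∀ z : ℂ, ∑ i ∈ s, (p i).eval z * Complex.exp ((q i).eval z) = 0) →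
      ∀ i ∈ s, p i = 0 := by
  intro n
  induction n with
  | zero =>
    intro s hs q p _ _ i hi
    rw [Finset.card_eq_zero] at hs
    subst hs; simp at hi
  | succ n IH =>
    intro s hs q p hq h i hi
    set s' := s.erase i with hs'
    have hcard : s'.card = n := by rw [hs', Finset.card_erase_of_mem hi, hs]; omega
    set r : ι → Polynomial ℂ := fun j => q j - q i with hr
    -- pairwise condition on r over s'
    have hr2 : ∀ a ∈ s', ∀ b ∈ s', a ≠ b → 0 < (r a - r b).natDegree := by
      intro a ha b hb hab
      have : r a - r b = q a - q b := by rw [hr]; ring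
      rw [this]
      exact hq a (Finset.mem_of_mem_erase ha) b (Finset.mem_of_mem_erase hb) hab
    -- base identity
    have h' : ∀ z : ℂ, (p i).eval z + ∑ j ∈ s', (p j).eval z * Complex.exp ((r j).eval z) = 0 := by
      intro z
      have hz := h z
      have hins : ∑ j ∈ s', (p j).eval z * Complex.exp ((q j).eval z)
          + (p i).eval z * Complex.exp ((q i).eval z) = 0 := by
        rw [Finset.sum_erase_add s _ hi]; exact hz
      have hexp : Complex.exp ((q i).eval z) ≠ 0 := Complex.exp_ne_zero _
      have key : ((p i).eval z + ∑ j ∈ s', (p j).eval z * Complex.exp ((r j).eval z))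
          * Complex.exp ((q i).eval z)
          = ∑ j ∈ s', (p j).eval z * Complex.exp ((q j).eval z)
            + (p i).eval z * Complex.exp ((q i).eval z) := by
        rw [add_mul, Finset.sum_mul, add_comm]
        congr 1
        refine Finset.sum_congr rfl fun j _ => ?_
        rw [hr, mul_assoc, ← Complex.exp_add, eval_sub, sub_add_cancel]
      have := key.trans hins
      exact (mul_eq_zero.mp this).resolve_right hexp
    -- inner induction
    have A : ∀ (m : ℕ) (p₀ : Polynomial ℂ) (pp : ι → Polynomial ℂ),
        (p₀ = 0 ∨ p₀.natDegree < m) →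
        (∀ z : ℂ, p₀.eval z + ∑ j ∈ s', (pp j).eval z * Complex.exp ((r j).eval z) = 0) →
        ∀ j ∈ s', pp j = 0 := by
      intro m
      induction m with
      | zero =>
        intro p₀ pp h0 hid j hj
        have hp0 : p₀ = 0 := by
          rcases h0 with h0 | h0
          · exact h0
          · exact absurd h0 (Nat.not_lt_zero _)
        subst hp0
        have hid' : ∀ z : ℂ, ∑ j ∈ s', (pp j).eval z * Complex.exp ((r j).eval z) = 0 := by
          intro z; have := hid z; simpa using this
        exact IH s' hcard r pp hr2 hid' j hj
      | succ m IHm =>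
        intro p₀ pp h0 hid j hj
        have hid' := deriv_step s' r pp p₀ hid
        have h0' : p₀.derivative = 0 ∨ p₀.derivative.natDegree < m := by
          rcases h0 with h0 | h0
          · left; rw [h0]; simp
          · by_cases hd0 : p₀.derivative = 0
            · left; exact hd0
            · right
              have hnd : p₀.natDegree ≠ 0 := by
                intro hnd
                have := eq_C_of_natDegree_eq_zero hnd
                rw [this] at hd0; simp at hd0
              have := natDegree_derivative_lt hnd
              omega
        have hPP := IHm p₀.derivative (fun j => (pp j).derivative + pp j * (r j).derivative) h0' hid'
        have hkill : (pp j).derivative + pp j * (r j).derivative = 0 := hPP j hj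
        refine kill_poly ?_ hkill
        intro hder
        have hj' : j ≠ i := Finset.ne_of_mem_erase hj
        have hpos : 0 < (r j).natDegree := hq j (Finset.mem_of_mem_erase hj) i hi hj'
        have := natDegree_eq_zero_of_derivative_eq_zero hder
        omega
    have hall : ∀ j ∈ s', p j = 0 := A ((p i).natDegree + 1) (p i) p (Or.inr (Nat.lt_succ_self _)) h'
    have hev : ∀ z : ℂ, (p i).eval z = 0 := by
      intro z
      have hz := h' z
      rw [Finset.sum_eq_zero (fun j hj => by rw [hall j hj]; simp)] at hz
      simpa using hz
    exact Polynomial.funext (fun z => by rw [hev z]; simp)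

theorem borel_sep {ι : Type} [DecidableEq ι] :
    ∀ (n : ℕ) (s : Finset ι) (q : ι → Polynomial ℂ) (cc : ι → ℂ) (i₀ : ι), s.card = n → i₀ ∈ s →
      (∀ j ∈ s, j ≠ i₀ → 0 < (q j - q i₀).natDegree) →
      (∀ z : ℂ, ∑ i ∈ s, cc i * Complex.exp ((q i).eval z) = 0) →
      cc i₀ = 0 := by
  intro n
  induction n with
  | zero =>
    intro s q cc i₀ hs hi₀ _ _
    rw [Finset.card_eq_zero] at hs; subst hs; simp at hi₀
  | succ n IH =>
    intro s q cc i₀ hs hi₀ hsep h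
    by_cases hpair : ∃ j ∈ s, ∃ k ∈ s, j ≠ i₀ ∧ k ≠ i₀ ∧ j ≠ k ∧ (q j - q k).natDegree = 0
    · obtain ⟨j, hj, k, hk, hji, hki, hjk, hdeg⟩ := hpair
      set κ : ℂ := (q j - q k).coeff 0 with hκ
      have hqjk : q j = q k + Polynomial.C κ := by
        have := Polynomial.eq_C_of_natDegree_eq_zero hdeg
        rw [hκ, ← this]; ring
      set s' := s.erase j with hs'
      set cc' : ι → ℂ := Function.update cc k (cc k + cc j * Complex.exp κ) with hcc'
      have hk' : k ∈ s' := Finset.mem_erase.mpr ⟨fun h => hjk h.symm, hk⟩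
      have hi₀' : i₀ ∈ s' := Finset.mem_erase.mpr ⟨fun h => hji h.symm, hi₀⟩
      have hcard : s'.card = n := by rw [hs', Finset.card_erase_of_mem hj, hs]; omega
      have hsum : ∀ z : ℂ, ∑ i ∈ s', cc' i * Complex.exp ((q i).eval z) = 0 := by
        intro z
        have hz := h z
        have h1 : ∑ i ∈ s', cc i * Complex.exp ((q i).eval z)
            + cc j * Complex.exp ((q j).eval z) = 0 := by
          rw [Finset.sum_erase_add s _ hj]; exact hz
        have h2 : ∑ i ∈ s', cc' i * Complex.exp ((q i).eval z)
            = ∑ i ∈ s', cc i * Complex.exp ((q i).eval z)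
              + cc j * Complex.exp κ * Complex.exp ((q k).eval z) := by
          have hstep : ∀ i ∈ s', cc' i * Complex.exp ((q i).eval z)
              = cc i * Complex.exp ((q i).eval z)
                + (if i = k then cc j * Complex.exp κ * Complex.exp ((q k).eval z) else 0) := by
            intro i hi
            by_cases hik : i = k
            · subst hik
              rw [hcc', Function.update_self]
              simp only [if_pos rfl]
              ring_nf
              simp
            · rw [hcc', Function.update_of_ne hik]
              simp [hik]
          rw [Finset.sum_congr rfl hstep, Finset.sum_add_distrib, Finset.sum_ite_eq' s' k]
          simp [hk']
        have h3 : cc j * Complex.exp ((q j).eval z)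
            = cc j * Complex.exp κ * Complex.exp ((q k).eval z) := by
          rw [mul_assoc, ← Complex.exp_add, hqjk]
          simp [add_comm]
        rw [h2, ← h3]
        exact h1
      have hres := IH s' q cc' i₀ hcard hi₀'
        (fun l hl hli => hsep l (Finset.mem_of_mem_erase hl) hli) hsum
      rw [hcc', Function.update_of_ne (fun h => hki h.symm)] at hres
      exact hres
    · push_neg at hpair
      have hpw : ∀ a ∈ s, ∀ b ∈ s, a ≠ b → 0 < (q a - q b).natDegree := by
        intro a ha b hb hab
        by_cases hai : a = i₀
        · subst hai
          have := hsep b hb (fun h => hab h.symm)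
          have hneg : q b - q a = -(q a - q b) := by ring
          rw [hneg, Polynomial.natDegree_neg] at this
          exact this
        · by_cases hbi : b = i₀
          · subst hbi; exact hsep a ha hai
          · have := hpair a ha b hb hai hbi hab
            omega
      have hres := borelP (s.card) s rfl q (fun i => Polynomial.C (cc i)) hpw
        (by intro z; simpa using h z) i₀ hi₀
      simpa using hres

lemma taylor_coeff_top (p : Polynomial ℂ) (c : ℂ) :
    (Polynomial.taylor c p).coeff p.natDegree = p.leadingCoeff := by
  rw [Polynomial.taylor_coeff]
  have hC : Polynomial.hasseDeriv p.natDegree p = Polynomial.C (p.coeff p.natDegree) := by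
    ext m
    rw [Polynomial.hasseDeriv_coeff]
    rcases Nat.eq_zero_or_pos m with hm | hm
    · subst hm; simp
    · have h1 : p.natDegree < m + p.natDegree := by omega
      rw [Polynomial.coeff_eq_zero_of_natDegree_lt h1, Polynomial.coeff_C,
        if_neg (by omega)]
      ring
  rw [hC, Polynomial.eval_C, Polynomial.leadingCoeff]

lemma taylor_coeff_high (p : Polynomial ℂ) (c : ℂ) {m : ℕ} (hm : p.natDegree < m) :
    (Polynomial.taylor c p).coeff m = 0 := by
  apply Polynomial.coeff_eq_zero_of_natDegree_lt
  rwa [Polynomial.natDegree_taylor]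

lemma nonconst_of_coeff {p : Polynomial ℂ} {m : ℕ} (hm : 1 ≤ m) (h : p.coeff m ≠ 0) :
    0 < p.natDegree :=
  lt_of_lt_of_le hm (Polynomial.le_natDegree_of_ne_zero h)

lemma shift_eventually {f : ℂ → ℂ} (hf : MeromorphicOn f Set.univ) (z d : ℂ) :
    ∀ᶠ y in nhdsWithin z {z}ᶜ, AnalyticAt ℂ f (y + d) := by
  have h := (hf (z + d) trivial).eventually_analyticAt
  have ht : Filter.Tendsto (fun y : ℂ => y + d) (nhdsWithin z {z}ᶜ) (nhdsWithin (z + d) {z + d}ᶜ) := by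
    rw [tendsto_nhdsWithin_iff]
    constructor
    · exact ((continuous_add_right d).tendsto z).mono_left nhdsWithin_le_nhds
    · filter_upwards [self_mem_nhdsWithin] with y hy
      simp only [Set.mem_compl_iff, Set.mem_singleton_iff] at hy ⊢
      exact fun hc => hy (add_right_cancel hc)
  exact ht.eventually h

lemma dense_good {f : ℂ → ℂ} (hf : MeromorphicOn f Set.univ) (c : ℂ) :
    Dense {z : ℂ | AnalyticAt ℂ f z ∧ AnalyticAt ℂ f (z + c) ∧ AnalyticAt ℂ f (z + c + c)} := by
  intro z
  rw [mem_closure_iff_frequently]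
  have h1 : ∀ᶠ y in nhdsWithin z {z}ᶜ, AnalyticAt ℂ f y := (hf z trivial).eventually_analyticAt
  have h2 := shift_eventually hf z c
  have h3 : ∀ᶠ y in nhdsWithin z {z}ᶜ, AnalyticAt ℂ f (y + c + c) := by
    have := shift_eventually hf z (c + c)
    filter_upwards [this] with y hy
    rwa [← add_assoc] at hy
  have hall := (h1.and (h2.and h3))
  have : ∀ᶠ y in nhdsWithin z {z}ᶜ,
      y ∈ {z : ℂ | AnalyticAt ℂ f z ∧ AnalyticAt ℂ f (z + c) ∧ AnalyticAt ℂ f (z + c + c)} := hall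
  exact (this.frequently).filter_mono nhdsWithin_le_nhds

lemma eq_const_of_dense {f : ℂ → ℂ} {S : Set ℂ} (hS : Dense S) {K : ℂ}
    (hK : ∀ z ∈ S, f z = K) {z : ℂ} (hz : AnalyticAt ℂ f z) : f z = K := by
  have hne : (nhdsWithin z S).NeBot := by
    rw [← mem_closure_iff_nhdsWithin_neBot]
    exact hS z
  have ht : Filter.Tendsto f (nhdsWithin z S) (nhds (f z)) :=
    hz.continuousAt.tendsto.mono_left nhdsWithin_le_nhds
  have ht2 : Filter.Tendsto f (nhdsWithin z S) (nhds K) := by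
    apply Filter.Tendsto.congr' _ tendsto_const_nhds
    filter_upwards [self_mem_nhdsWithin] with y hy
    exact (hK y hy).symm
  exact tendsto_nhds_unique ht ht2

/-- The ten exponent polynomials occurring in the key exponential identity. -/
noncomputable def Q10 (α β : Polynomial ℂ) (c : ℂ) : Fin 10 → Polynomial ℂ :=
  ![α + Polynomial.taylor c β, α + Polynomial.taylor c α, α + Polynomial.taylor c α + Polynomial.taylor c β, β + Polynomial.taylor c β, β + Polynomial.taylor c α, β + Polynomial.taylor c α + Polynomial.taylor c β, α + β + Polynomial.taylor c β, α + β + Polynomial.taylor c α, Polynomial.taylor c β, Polynomial.taylor c α]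

lemma sep10 (α β : Polynomial ℂ) (c : ℂ)
    (hL : α.coeff α.natDegree ≠ 0) (ha1 : 1 ≤ α.natDegree)
    (hγpos : 0 < (β - α).natDegree) (hβpos : 0 < β.natDegree)
    (hβx : β.coeff α.natDegree = 0 ∨ β.coeff α.natDegree = α.coeff α.natDegree)
    (hβc : (Polynomial.taylor c β).coeff α.natDegree = β.coeff α.natDegree)
    (hαc : (Polynomial.taylor c α).coeff α.natDegree = α.coeff α.natDegree) :
    ∀ j : Fin 10, j ≠ 8 → 0 < ((Q10 α β c j) - (Q10 α β c 8)).natDegree := by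
  have hL2 : α.coeff α.natDegree + α.coeff α.natDegree ≠ 0 :=
    fun h => hL (add_self_eq_zero.mp h)
  intro j hj
  fin_cases j
  · show 0 < ((α + Polynomial.taylor c β) - Polynomial.taylor c β).natDegree
    have h : α + Polynomial.taylor c β - Polynomial.taylor c β = α := by ring
    rw [h]; exact ha1
  · show 0 < ((α + Polynomial.taylor c α) - Polynomial.taylor c β).natDegree
    refine nonconst_of_coeff ha1 ?_
    simp only [Polynomial.coeff_sub, Polynomial.coeff_add, hβc, hαc]
    rcases hβx with hx | hx <;> rw [hx] <;> intro h
    · exact hL2 (by linear_combination h)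
    · exact hL (by linear_combination h)
  · show 0 < ((α + Polynomial.taylor c α + Polynomial.taylor c β)
        - Polynomial.taylor c β).natDegree
    refine nonconst_of_coeff ha1 ?_
    simp only [Polynomial.coeff_sub, Polynomial.coeff_add, hβc, hαc]
    intro h; exact hL2 (by linear_combination h)
  · show 0 < ((β + Polynomial.taylor c β) - Polynomial.taylor c β).natDegree
    have h : β + Polynomial.taylor c β - Polynomial.taylor c β = β := by ring
    rw [h]; exact hβpos
  · show 0 < ((β + Polynomial.taylor c α) - Polynomial.taylor c β).natDegree
    refine nonconst_of_coeff ha1 ?_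
    simp only [Polynomial.coeff_sub, Polynomial.coeff_add, hβc, hαc]
    rcases hβx with hx | hx <;> rw [hx] <;> intro h
    · exact hL (by linear_combination h)
    · exact hL (by linear_combination h)
  · show 0 < ((β + Polynomial.taylor c α + Polynomial.taylor c β)
        - Polynomial.taylor c β).natDegree
    refine nonconst_of_coeff ha1 ?_
    simp only [Polynomial.coeff_sub, Polynomial.coeff_add, hβc, hαc]
    rcases hβx with hx | hx <;> rw [hx] <;> intro h
    · exact hL (by linear_combination h)
    · exact hL2 (by linear_combination h)
  · show 0 < ((α + β + Polynomial.taylor c β) - Polynomial.taylor c β).natDegree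
    refine nonconst_of_coeff ha1 ?_
    simp only [Polynomial.coeff_sub, Polynomial.coeff_add, hβc, hαc]
    rcases hβx with hx | hx <;> rw [hx] <;> intro h
    · exact hL (by linear_combination h)
    · exact hL2 (by linear_combination h)
  · show 0 < ((α + β + Polynomial.taylor c α) - Polynomial.taylor c β).natDegree
    refine nonconst_of_coeff ha1 ?_
    simp only [Polynomial.coeff_sub, Polynomial.coeff_add, hβc, hαc]
    rcases hβx with hx | hx <;> rw [hx] <;> intro h
    · exact hL2 (by linear_combination h)
    · exact hL2 (by linear_combination h)
  · exact absurd rfl hj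
  · show 0 < (Polynomial.taylor c α - Polynomial.taylor c β).natDegree
    have h : Polynomial.taylor c α - Polynomial.taylor c β
        = -(Polynomial.taylor c (β - α)) := by
      rw [map_sub]; ring
    rw [h, Polynomial.natDegree_neg, Polynomial.natDegree_taylor]
    exact hγpos

lemma main10 (α β : Polynomial ℂ) (c : ℂ) (e₁ e₂ : ℂ)
    (htne : (e₂ - e₁) ≠ 0)
    (hE : ∀ z : ℂ,
      -e₂ * (Complex.exp (α.eval z) * Complex.exp (β.eval (z + c))) + e₁ * (Complex.exp (α.eval z) * Complex.exp (α.eval (z + c))) + (e₂ - e₁) * (Complex.exp (α.eval z) * Complex.exp (α.eval (z + c)) * Complex.exp (β.eval (z + c)))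
      + e₂ * (Complex.exp (β.eval z) * Complex.exp (β.eval (z + c))) - e₁ * (Complex.exp (β.eval z) * Complex.exp (α.eval (z + c))) - (e₂ - e₁) * (Complex.exp (β.eval z) * Complex.exp (α.eval (z + c)) * Complex.exp (β.eval (z + c)))
      + (e₂ - e₁) * (Complex.exp (α.eval z) * Complex.exp (β.eval z) * Complex.exp (β.eval (z + c))) - (e₂ - e₁) * (Complex.exp (α.eval z) * Complex.exp (β.eval z) * Complex.exp (α.eval (z + c)))
      - (e₂ - e₁) * Complex.exp (β.eval (z + c)) + (e₂ - e₁) * Complex.exp (α.eval (z + c)) = 0)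
    (hL : α.coeff α.natDegree ≠ 0) (ha1 : 1 ≤ α.natDegree)
    (hγpos : 0 < (β - α).natDegree) (hβpos : 0 < β.natDegree)
    (hβx : β.coeff α.natDegree = 0 ∨ β.coeff α.natDegree = α.coeff α.natDegree)
    (hβc : (Polynomial.taylor c β).coeff α.natDegree = β.coeff α.natDegree)
    (hαc : (Polynomial.taylor c α).coeff α.natDegree = α.coeff α.natDegree) : False := by
  set cc10 : Fin 10 → ℂ :=
    ![-e₂, e₁, e₂ - e₁, e₂, -e₁, -(e₂ - e₁), e₂ - e₁, -(e₂ - e₁), -(e₂ - e₁), e₂ - e₁]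
    with hcc10
  have hsum : ∀ z : ℂ, ∑ i : Fin 10, cc10 i * Complex.exp ((Q10 α β c i).eval z) = 0 := by
    intro z
    have hz := hE z
    simp only [hcc10, Q10, Fin.sum_univ_succ, Fin.sum_univ_zero, Matrix.cons_val_zero,
      Matrix.cons_val_succ, Polynomial.eval_add, Polynomial.taylor_eval, Complex.exp_add]
    linear_combination hz
  have hres := borel_sep 10 Finset.univ (Q10 α β c) cc10 8 (by simp) (Finset.mem_univ _)
    (fun j _ hj => sep10 α β c hL ha1 hγpos hβpos hβx hβc hαc j hj) hsum
  have hres' : -(e₂ - e₁) = 0 := hres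
  exact htne (by linear_combination -hres')

end BorelAux

/-- Under the hypotheses of the main theorem, if
`(f - e₁)/(Δf - e₁) = e^α` and `(f - e₂)/(Δf - e₂) = e^β` with `e^α ≢ 1`, `e^β ≢ 1`
and `e^α ≢ e^β`, then with `γ = β - α` one has `deg β = deg γ ≥ 1`. -/
theorem deg_beta_eq_deg_gamma (f : ℂ → ℂ) (c : ℂ)
    (hf : MeromorphicOn f Set.univ)
    (htrans : TranscendentalMero f)
    (hford : FiniteOrderMero f)
    (hΔ : ¬ ∀ z : ℂ, AnalyticAt ℂ f z → AnalyticAt ℂ f (z + c) → f (z + c) - f z = 0)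
    (e₁ e₂ : ℂ) (he : e₁ ≠ e₂)
    (h1 : ShareCM f (fun z => f (z + c) - f z) e₁)
    (h2 : ShareCM f (fun z => f (z + c) - f z) e₂)
    (hinf : SharePolesCM f (fun z => f (z + c) - f z))
    (α β : Polynomial ℂ)
    (hα : ∀ z : ℂ, AnalyticAt ℂ f z → AnalyticAt ℂ f (z + c) →
      f z - e₁ = Complex.exp (α.eval z) * ((f (z + c) - f z) - e₁))
    (hβ : ∀ z : ℂ, AnalyticAt ℂ f z → AnalyticAt ℂ f (z + c) →
      f z - e₂ = Complex.exp (β.eval z) * ((f (z + c) - f z) - e₂))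
    (hα1 : ¬ ∀ z : ℂ, Complex.exp (α.eval z) = 1)
    (hβ1 : ¬ ∀ z : ℂ, Complex.exp (β.eval z) = 1)
    (hαβ : ¬ ∀ z : ℂ, Complex.exp (α.eval z) = Complex.exp (β.eval z)) :
    β.degree = (β - α).degree ∧ 1 ≤ (β - α).degree := by
  classical
  have htne : (e₂ - e₁) ≠ 0 := sub_ne_zero.mpr (Ne.symm he)
  have hdense := dense_good hf c
  set G := {z : ℂ | AnalyticAt ℂ f z ∧ AnalyticAt ℂ f (z + c) ∧ AnalyticAt ℂ f (z + c + c)}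
    with hG
  -- the fundamental exponential identity
  have hE : ∀ z : ℂ,
      -e₂ * (Complex.exp (α.eval z) * Complex.exp (β.eval (z + c))) + e₁ * (Complex.exp (α.eval z) * Complex.exp (α.eval (z + c))) + (e₂ - e₁) * (Complex.exp (α.eval z) * Complex.exp (α.eval (z + c)) * Complex.exp (β.eval (z + c)))
      + e₂ * (Complex.exp (β.eval z) * Complex.exp (β.eval (z + c))) - e₁ * (Complex.exp (β.eval z) * Complex.exp (α.eval (z + c))) - (e₂ - e₁) * (Complex.exp (β.eval z) * Complex.exp (α.eval (z + c)) * Complex.exp (β.eval (z + c)))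
      + (e₂ - e₁) * (Complex.exp (α.eval z) * Complex.exp (β.eval z) * Complex.exp (β.eval (z + c))) - (e₂ - e₁) * (Complex.exp (α.eval z) * Complex.exp (β.eval z) * Complex.exp (α.eval (z + c)))
      - (e₂ - e₁) * Complex.exp (β.eval (z + c)) + (e₂ - e₁) * Complex.exp (α.eval (z + c)) = 0 := by
    have hEG : ∀ z ∈ G,
        -e₂ * (Complex.exp (α.eval z) * Complex.exp (β.eval (z + c))) + e₁ * (Complex.exp (α.eval z) * Complex.exp (α.eval (z + c))) + (e₂ - e₁) * (Complex.exp (α.eval z) * Complex.exp (α.eval (z + c)) * Complex.exp (β.eval (z + c)))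
      + e₂ * (Complex.exp (β.eval z) * Complex.exp (β.eval (z + c))) - e₁ * (Complex.exp (β.eval z) * Complex.exp (α.eval (z + c))) - (e₂ - e₁) * (Complex.exp (β.eval z) * Complex.exp (α.eval (z + c)) * Complex.exp (β.eval (z + c)))
      + (e₂ - e₁) * (Complex.exp (α.eval z) * Complex.exp (β.eval z) * Complex.exp (β.eval (z + c))) - (e₂ - e₁) * (Complex.exp (α.eval z) * Complex.exp (β.eval z) * Complex.exp (α.eval (z + c)))
      - (e₂ - e₁) * Complex.exp (β.eval (z + c)) + (e₂ - e₁) * Complex.exp (α.eval (z + c)) = 0 := by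
      intro z hz
      obtain ⟨hz1, hz2, hz3⟩ := hz
      have hh1 := hα z hz1 hz2
      have hh2 := hβ z hz1 hz2
      have hh3 := hα (z + c) hz2 hz3
      have hh4 := hβ (z + c) hz2 hz3
      set U := Complex.exp (α.eval z)
      set V := Complex.exp (β.eval z)
      set Uc := Complex.exp (α.eval (z + c))
      set Vc := Complex.exp (β.eval (z + c))
      linear_combination (-(Vc - Uc) * V - (Vc - Uc)) * hh1 + ((Vc - Uc) * U + (Vc - Uc)) * hh2
        + (-(U - V) * Vc) * hh3 + ((U - V) * Uc) * hh4
    have hcont : Continuous (fun z : ℂ =>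
        -e₂ * (Complex.exp (α.eval z) * Complex.exp (β.eval (z + c))) + e₁ * (Complex.exp (α.eval z) * Complex.exp (α.eval (z + c))) + (e₂ - e₁) * (Complex.exp (α.eval z) * Complex.exp (α.eval (z + c)) * Complex.exp (β.eval (z + c)))
      + e₂ * (Complex.exp (β.eval z) * Complex.exp (β.eval (z + c))) - e₁ * (Complex.exp (β.eval z) * Complex.exp (α.eval (z + c))) - (e₂ - e₁) * (Complex.exp (β.eval z) * Complex.exp (α.eval (z + c)) * Complex.exp (β.eval (z + c)))
      + (e₂ - e₁) * (Complex.exp (α.eval z) * Complex.exp (β.eval z) * Complex.exp (β.eval (z + c))) - (e₂ - e₁) * (Complex.exp (α.eval z) * Complex.exp (β.eval z) * Complex.exp (α.eval (z + c)))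
      - (e₂ - e₁) * Complex.exp (β.eval (z + c)) + (e₂ - e₁) * Complex.exp (α.eval (z + c))) := by fun_prop
    have heq := Continuous.ext_on hdense hcont continuous_const hEG
    intro z
    exact congrFun heq z
  -- Step 1 : γ = β - α is nonconstant
  have hγnc : 0 < (β - α).natDegree := by
    by_contra hg0
    have hg00 : (β - α).natDegree = 0 := by omega
    have hγC : β - α = Polynomial.C ((β - α).coeff 0) :=
      Polynomial.eq_C_of_natDegree_eq_zero hg00
    set k := Complex.exp ((β - α).coeff 0) with hk_def
    have hβα : ∀ z : ℂ, β.eval z = α.eval z + (β - α).coeff 0 := by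
      intro z
      have h2' : (β - α).eval z = (β - α).coeff 0 := by
        conv_lhs => rw [hγC]
        simp
      rw [Polynomial.eval_sub] at h2'
      linear_combination h2'
    have hV : ∀ z : ℂ, Complex.exp (β.eval z) = k * Complex.exp (α.eval z) := by
      intro z
      rw [hβα z, Complex.exp_add, hk_def]
      ring
    have hk1 : k ≠ 1 := by
      intro hk
      apply hαβ
      intro z
      rw [hV z, hk, one_mul]
    rcases Nat.eq_zero_or_pos α.natDegree with ha0 | ha1
    · -- α constant : f is constant, contradicting transcendence
      have hαC : α = Polynomial.C (α.coeff 0) := Polynomial.eq_C_of_natDegree_eq_zero ha0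
      set u := Complex.exp (α.coeff 0) with hu_def
      have hu0 : u ≠ 0 := Complex.exp_ne_zero _
      have hvu : k * u - u ≠ 0 := by
        intro hx
        apply hk1
        have h5 : (k - 1) * u = 0 := by linear_combination hx
        rcases mul_eq_zero.mp h5 with h6 | h6
        · linear_combination h6
        · exact absurd h6 hu0
      have hUz : ∀ z : ℂ, Complex.exp (α.eval z) = u := by
        intro z
        rw [hu_def]
        congr 1
        conv_lhs => rw [hαC]
        simp
      have hVz : ∀ z : ℂ, Complex.exp (β.eval z) = k * u := by
        intro z
        rw [hV z, hUz z]
      set K := (e₁ * (k * u) - e₂ * u + (e₂ - e₁) * (u * (k * u))) / (k * u - u) with hK_def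
      have hfK : ∀ z ∈ G, f z = K := by
        intro z hz
        obtain ⟨hz1, hz2, _⟩ := hz
        have hh1 := hα z hz1 hz2
        have hh2 := hβ z hz1 hz2
        rw [hUz z] at hh1
        rw [hVz z] at hh2
        rw [hK_def, eq_div_iff hvu]
        linear_combination (k * u) * hh1 - u * hh2
      apply htrans
      refine ⟨Polynomial.C K, 1, one_ne_zero, ?_⟩
      intro z hz _
      simp only [Polynomial.eval_C, Polynomial.eval_one, div_one]
      exact eq_const_of_dense hdense hfK hz
    · -- α nonconstant : four-term Borel identity gives a contradiction
      have hαne : α ≠ 0 := fun h => by simp [h] at ha1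
      have hL : α.coeff α.natDegree ≠ 0 := by
        rw [Polynomial.coeff_natDegree]
        exact Polynomial.leadingCoeff_ne_zero.mpr hαne
      have hL2 : α.coeff α.natDegree + α.coeff α.natDegree ≠ 0 :=
        fun h => hL (add_self_eq_zero.mp h)
      have hαcco : (Polynomial.taylor c α).coeff α.natDegree = α.coeff α.natDegree := by
        rw [taylor_coeff_top, Polynomial.coeff_natDegree]
      set q4 : Fin 4 → Polynomial ℂ :=
        ![α + Polynomial.taylor c α,
          α + Polynomial.taylor c α + Polynomial.taylor c α,
          α + α + Polynomial.taylor c α,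
          Polynomial.taylor c α] with hq4
      set cc4 : Fin 4 → ℂ :=
        ![e₁ - e₂ * k, (e₂ - e₁) * k, -((e₂ - e₁) * k), e₂ - e₁] with hcc4
      have h1k : (1 : ℂ) - k ≠ 0 := sub_ne_zero.mpr (Ne.symm hk1)
      have hsum4 : ∀ z : ℂ, ∑ i : Fin 4, cc4 i * Complex.exp ((q4 i).eval z) = 0 := by
        intro z
        have hz := hE z
        rw [hV z, hV (z + c)] at hz
        have hS : (∑ i : Fin 4, cc4 i * Complex.exp ((q4 i).eval z)) * (1 - k) = 0 := by
          simp only [hq4, hcc4, Fin.sum_univ_succ, Fin.sum_univ_zero, Matrix.cons_val_zero,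
            Matrix.cons_val_succ, Polynomial.eval_add, Polynomial.taylor_eval, Complex.exp_add]
          linear_combination hz
        exact (mul_eq_zero.mp hS).resolve_right h1k
      have hsep4 : ∀ j ∈ (Finset.univ : Finset (Fin 4)), j ≠ 3 →
          0 < (q4 j - q4 3).natDegree := by
        intro j _ hj
        fin_cases j
        · show 0 < ((α + Polynomial.taylor c α) - Polynomial.taylor c α).natDegree
          have h : α + Polynomial.taylor c α - Polynomial.taylor c α = α := by ring
          rw [h]; exact ha1
        · show 0 < ((α + Polynomial.taylor c α + Polynomial.taylor c α)
              - Polynomial.taylor c α).natDegree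
          refine nonconst_of_coeff ha1 ?_
          simp only [Polynomial.coeff_sub, Polynomial.coeff_add, hαcco]
          intro h; exact hL2 (by linear_combination h)
        · show 0 < ((α + α + Polynomial.taylor c α) - Polynomial.taylor c α).natDegree
          refine nonconst_of_coeff ha1 ?_
          simp only [Polynomial.coeff_sub, Polynomial.coeff_add, hαcco]
          intro h; exact hL2 (by linear_combination h)
        · exact absurd rfl hj
      have hres := borel_sep 4 Finset.univ q4 cc4 3 (by simp) (Finset.mem_univ _) hsep4 hsum4
      have hres' : e₂ - e₁ = 0 := hres
      exact htne hres'
  -- now the trichotomy on natDegree β vs natDegree (β - α)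
  have hγne : β - α ≠ 0 := fun h => by simp [h] at hγnc
  rcases lt_trichotomy β.natDegree (β - α).natDegree with hbg | hbg | hbg
  · -- b < g : then natDegree α = natDegree (β - α)
    have hag : α.natDegree = (β - α).natDegree := by
      have hh1 : (β - α).natDegree ≤ max β.natDegree α.natDegree :=
        Polynomial.natDegree_sub_le _ _
      have hh2 : α.natDegree ≤ max β.natDegree (β - α).natDegree := by
        have e : β - (β - α) = α := by ring
        calc α.natDegree = (β - (β - α)).natDegree := by rw [e]
          _ ≤ _ := Polynomial.natDegree_sub_le _ _
      rcases le_max_iff.mp hh1 with h | h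
      · omega
      · rcases le_max_iff.mp hh2 with h' | h' <;> omega
    have ha1 : 1 ≤ α.natDegree := by omega
    have hαne : α ≠ 0 := fun h => by simp [h] at ha1
    have hL : α.coeff α.natDegree ≠ 0 := by
      rw [Polynomial.coeff_natDegree]
      exact Polynomial.leadingCoeff_ne_zero.mpr hαne
    have hL2 : α.coeff α.natDegree + α.coeff α.natDegree ≠ 0 :=
      fun h => hL (add_self_eq_zero.mp h)
    have hαcco : (Polynomial.taylor c α).coeff α.natDegree = α.coeff α.natDegree := by
      rw [taylor_coeff_top, Polynomial.coeff_natDegree]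
    rcases Nat.eq_zero_or_pos β.natDegree with hb0 | hb1
    · -- β is constant
      exfalso
      have hβC : β = Polynomial.C (β.coeff 0) := Polynomial.eq_C_of_natDegree_eq_zero hb0
      set B := Complex.exp (β.coeff 0) with hB_def
      have hB0 : B ≠ 0 := Complex.exp_ne_zero _
      have hVz : ∀ z : ℂ, Complex.exp (β.eval z) = B := by
        intro z
        rw [hB_def]
        congr 1
        conv_lhs => rw [hβC]
        simp
      have hB1 : B ≠ 1 := by
        intro h
        apply hβ1
        intro z
        rw [hVz z, h]
      set q4 : Fin 4 → Polynomial ℂ :=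
        ![α + Polynomial.taylor c α, α, Polynomial.taylor c α, 0] with hq4
      set cc4 : Fin 4 → ℂ :=
        ![e₁, B * ((e₂ - e₁) * B - e₂), (e₂ - e₁) - e₁ * B - (e₂ - e₁) * B * B,
          B * (e₂ * B - (e₂ - e₁))] with hcc4
      have hsum4 : ∀ z : ℂ, ∑ i : Fin 4, cc4 i * Complex.exp ((q4 i).eval z) = 0 := by
        intro z
        have hz := hE z
        rw [hVz z, hVz (z + c)] at hz
        simp only [hq4, hcc4, Fin.sum_univ_succ, Fin.sum_univ_zero, Matrix.cons_val_zero,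
          Matrix.cons_val_succ, Polynomial.eval_add, Polynomial.eval_zero,
          Polynomial.taylor_eval, Complex.exp_add, Complex.exp_zero]
        linear_combination hz
      have hres0 := borel_sep 4 Finset.univ q4 cc4 0 (by simp) (Finset.mem_univ _)
        (by
          intro j _ hj
          fin_cases j
          · exact absurd rfl hj
          · show 0 < (α - (α + Polynomial.taylor c α)).natDegree
            have h : α - (α + Polynomial.taylor c α) = -(Polynomial.taylor c α) := by ring
            rw [h, Polynomial.natDegree_neg, Polynomial.natDegree_taylor]
            exact ha1
          · show 0 < (Polynomial.taylor c α - (α + Polynomial.taylor c α)).natDegree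
            have h : Polynomial.taylor c α - (α + Polynomial.taylor c α) = -α := by ring
            rw [h, Polynomial.natDegree_neg]
            exact ha1
          · show 0 < ((0 : Polynomial ℂ) - (α + Polynomial.taylor c α)).natDegree
            refine nonconst_of_coeff ha1 ?_
            simp only [Polynomial.coeff_sub, Polynomial.coeff_add, Polynomial.coeff_zero, hαcco]
            intro h
            exact hL2 (by linear_combination -h)) hsum4
      have hres3 := borel_sep 4 Finset.univ q4 cc4 3 (by simp) (Finset.mem_univ _)
        (by
          intro j _ hj
          fin_cases j
          · show 0 < ((α + Polynomial.taylor c α) - (0 : Polynomial ℂ)).natDegree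
            refine nonconst_of_coeff ha1 ?_
            simp only [Polynomial.coeff_sub, Polynomial.coeff_add, Polynomial.coeff_zero, hαcco]
            intro h
            exact hL2 (by linear_combination h)
          · show 0 < (α - (0 : Polynomial ℂ)).natDegree
            rw [sub_zero]
            exact ha1
          · show 0 < (Polynomial.taylor c α - (0 : Polynomial ℂ)).natDegree
            rw [sub_zero, Polynomial.natDegree_taylor]
            exact ha1
          · exact absurd rfl hj) hsum4
      have he1 : e₁ = 0 := hres0
      have hB3 : B * (e₂ * B - (e₂ - e₁)) = 0 := hres3
      rcases mul_eq_zero.mp hB3 with h | h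
      · exact hB0 h
      · have he2 : e₂ ≠ 0 := fun h2 => htne (by rw [he1, h2]; ring)
        have hfin : e₂ * (B - 1) = 0 := by linear_combination h - he1
        rcases mul_eq_zero.mp hfin with h' | h'
        · exact he2 h'
        · exact absurd (by linear_combination h') hB1
    · -- 1 ≤ b < g : ten-term Borel contradiction
      have hβco : β.coeff α.natDegree = 0 :=
        Polynomial.coeff_eq_zero_of_natDegree_lt (by omega)
      have hβcco : (Polynomial.taylor c β).coeff α.natDegree = β.coeff α.natDegree := by
        rw [taylor_coeff_high β c (by omega : β.natDegree < α.natDegree), hβco]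
      exact (main10 α β c e₁ e₂ htne hE hL ha1 hγnc hb1 (Or.inl hβco) hβcco hαcco).elim
  · -- b = g : the desired conclusion
    have hβne : β ≠ 0 := by
      intro h
      have hz : β.natDegree = 0 := by rw [h]; simp
      omega
    constructor
    · rw [Polynomial.degree_eq_natDegree hβne, Polynomial.degree_eq_natDegree hγne]
      exact_mod_cast hbg
    · rw [Polynomial.degree_eq_natDegree hγne]
      exact_mod_cast hγnc
  · -- g < b : then a = b, ten-term Borel contradiction
    have hab : α.natDegree = β.natDegree := by
      have hh1 : β.natDegree ≤ max (β - α).natDegree α.natDegree := by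
        have e : (β - α) + α = β := by ring
        calc β.natDegree = ((β - α) + α).natDegree := by rw [e]
          _ ≤ _ := Polynomial.natDegree_add_le _ _
      have hh2 : α.natDegree ≤ max β.natDegree (β - α).natDegree := by
        have e : β - (β - α) = α := by ring
        calc α.natDegree = (β - (β - α)).natDegree := by rw [e]
          _ ≤ _ := Polynomial.natDegree_sub_le _ _
      rcases le_max_iff.mp hh1 with h | h
      · omega
      · rcases le_max_iff.mp hh2 with h' | h' <;> omega
    have ha1 : 1 ≤ α.natDegree := by omega
    have hαne : α ≠ 0 := fun h => by simp [h] at ha1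
    have hL : α.coeff α.natDegree ≠ 0 := by
      rw [Polynomial.coeff_natDegree]
      exact Polynomial.leadingCoeff_ne_zero.mpr hαne
    have hαcco : (Polynomial.taylor c α).coeff α.natDegree = α.coeff α.natDegree := by
      rw [taylor_coeff_top, Polynomial.coeff_natDegree]
    have hβco : β.coeff α.natDegree = α.coeff α.natDegree := by
      have h0 : (β - α).coeff α.natDegree = 0 :=
        Polynomial.coeff_eq_zero_of_natDegree_lt (by omega)
      rw [Polynomial.coeff_sub] at h0
      linear_combination h0
    have hβcco : (Polynomial.taylor c β).coeff α.natDegree = β.coeff α.natDegree := by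
      calc (Polynomial.taylor c β).coeff α.natDegree
          = (Polynomial.taylor c β).coeff β.natDegree := by rw [hab]
        _ = β.leadingCoeff := taylor_coeff_top β c
        _ = β.coeff β.natDegree := rfl
        _ = β.coeff α.natDegree := by rw [hab]
    exact (main10 α β c e₁ e₂ htne hE hL ha1 hγnc (by omega) (Or.inr hβco) hβcco hαcco).elim
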